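/- Consider the group G presented with generators s_i and z_i for i ∈ ℕ, and relators: s_0; the commutators s_i z_i s_i^{-1} z_i^{-1}; the words (s_i^{-1} z_{i+1} s_i)(z_i^{-1} z_{i+1}^{-1} z_i^2)^{-1} (encoding s_i^{-1} z_{i+1} s_i = z_i^{-1} z_{i+1}^{-1} z_i^2); and the words s_{i+1}^{-1} s_i^2 z_i^3 z_{i+1}^{-6} (encoding s_{i+1} = s_i^2 z_i^3 z_{i+1}^{-6}), for all i ∈ ℕ. Then there exists a group homomorphism φ : G → Equiv.Perm ℕ with φ(z_i) equal to the 3-cycle (i, i+1, i+2) and φ(s_i) = 1 for all i, and consequently G is not abelian (since the 3-cycles (0,1,2) and (1,2,3) do not commute). -/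

import Mathlib

/-- The generator s_i of the free group on the generators s_i, z_i (i ∈ ℕ). -/
def s (i : ℕ) : FreeGroup (ℕ ⊕ ℕ) := FreeGroup.of (Sum.inl i)

/-- The generator z_i of the free group on the generators s_i, z_i (i ∈ ℕ). -/
def z (i : ℕ) : FreeGroup (ℕ ⊕ ℕ) := FreeGroup.of (Sum.inr i)

/-- Relators for the dyadic solenoid embedded with a trefoil braid at each level: s_0;
[s_i, z_i]; s_i⁻¹ z_{i+1} s_i = z_i⁻¹ z_{i+1}⁻¹ z_i²; and s_{i+1} = s_i² z_i³ z_{i+1}⁻⁶. -/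
def trefoilRels : Set (FreeGroup (ℕ ⊕ ℕ)) :=
  {s 0} ∪
    {r | ∃ i : ℕ,
      r = s i * z i * (s i)⁻¹ * (z i)⁻¹ ∨
      r = ((s i)⁻¹ * z (i + 1) * s i) * ((z i)⁻¹ * (z (i + 1))⁻¹ * (z i) ^ 2)⁻¹ ∨
      r = (s (i + 1))⁻¹ * (s i) ^ 2 * (z i) ^ 3 * (z (i + 1)) ^ (-6 : ℤ)}

set_option maxHeartbeats 2000000 in
/-- There is a homomorphism from the presented group of the trefoil-embedded dyadic solenoid
complement to the permutations of ℕ sending each z_i to the 3-cycle (i, i+1, i+2) and each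
s_i to the identity; consequently the presented group is not abelian. -/
theorem presentedGroup_trefoil_nonabelian (c : ℕ → Equiv.Perm ℕ)
    (hc : ∀ i : ℕ, c i i = i + 1 ∧ c i (i + 1) = i + 2 ∧ c i (i + 2) = i ∧
      ∀ x : ℕ, x ≠ i → x ≠ i + 1 → x ≠ i + 2 → c i x = x) :
    (∃ φ : PresentedGroup trefoilRels →* Equiv.Perm ℕ,
      (∀ i : ℕ, φ (PresentedGroup.of (Sum.inr i)) = c i) ∧
      (∀ i : ℕ, φ (PresentedGroup.of (Sum.inl i)) = 1)) ∧
    ¬ (∀ a b : PresentedGroup trefoilRels, a * b = b * a) := by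
  classical
  set f : ℕ ⊕ ℕ → Equiv.Perm ℕ := Sum.elim (fun _ => 1) c with hf
  have hval : ∀ i x : ℕ, c i x =
      if x = i then i + 1 else if x = i + 1 then i + 2 else if x = i + 2 then i else x := by
    intro i x
    obtain ⟨h0, h1, h2, ho⟩ := hc i
    split_ifs with a b d
    · subst a; exact h0
    · subst b; exact h1
    · subst d; exact h2
    · exact ho x a b d
  have hcube : ∀ i, (c i) ^ 3 = 1 := by
    intro i
    ext x
    simp only [pow_succ, pow_zero, one_mul, Equiv.Perm.mul_apply, Equiv.Perm.one_apply, hval]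
    split_ifs <;> omega
  have hbraid : ∀ i, c (i + 1) * c i * c (i + 1) = c i * c i := by
    intro i
    ext x
    simp only [Equiv.Perm.mul_apply, hval]
    split_ifs <;> omega
  have hrel : ∀ r ∈ trefoilRels, FreeGroup.lift f r = 1 := by
    rintro r (h | ⟨i, h | h | h⟩)
    · simp only [Set.mem_singleton_iff] at h
      subst h
      simp [s, f]
    · subst h
      simp [s, z, f]
    · subst h
      simp only [s, z, map_mul, map_inv, map_pow, map_zpow, FreeGroup.lift_apply_of, hf,
        Sum.elim_inl, Sum.elim_inr, inv_one, one_mul, mul_one]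
      rw [mul_inv_eq_one]
      have : (c i)⁻¹ * (c (i + 1))⁻¹ * (c i) ^ 2 = c (i + 1) := by
        rw [sq, ← hbraid i]; group
      rw [this]
    · subst h
      simp only [s, z, map_mul, map_inv, map_pow, map_zpow, FreeGroup.lift_apply_of, hf,
        Sum.elim_inl, Sum.elim_inr, inv_one, one_mul, mul_one, one_pow]
      have h6 : (c (i + 1)) ^ (6 : ℕ) = 1 := by
        rw [show (6 : ℕ) = 3 * 2 from rfl, pow_mul, hcube, one_pow]
      have h6' : (c (i + 1)) ^ (-6 : ℤ) = 1 := by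
        rw [show (-6 : ℤ) = -((6 : ℕ) : ℤ) from rfl, zpow_neg, zpow_natCast, h6, inv_one]
      rw [hcube, h6', mul_one]
  refine ⟨⟨PresentedGroup.toGroup hrel, fun i => PresentedGroup.toGroup.of hrel,
    fun i => PresentedGroup.toGroup.of hrel⟩, ?_⟩
  intro hab
  have h01 : c 0 * c 1 = c 1 * c 0 := by
    have := hab (PresentedGroup.of (Sum.inr 0)) (PresentedGroup.of (Sum.inr 1))
    have h2 := congrArg (PresentedGroup.toGroup hrel) this
    simpa [PresentedGroup.toGroup.of, hf] using h2
  have := congrArg (fun p : Equiv.Perm ℕ => p 0) h01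
  simp only [Equiv.Perm.mul_apply, hval] at this
  norm_num at this
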